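/- Let active be a finite set of coins and hc a finite set of address–coin pairs with C_a = {c : (a,c) ∈ hc}. Define M_Inact = {c ∉ active : ∃ a, c ∈ C_a}, M_Least = {c ∈ active : ∀ a, c ∉ C_a}, M_Most = {c : ∃ a ≠ b, c ∈ C_a ∧ c ∈ C_b}, M_Pairs = {(a,c) : c ∈ C_a ∧ ∃ b ≠ a, c ∈ C_b}, V_≤ = |M_Least|, V_≥ = |M_Inact| + |M_Pairs| − |M_Most|. If V_≥ = 0, then Σ_a |C_a| = |active| + V_≥ − V_≤, i.e., Σ_a |C_a| = |active| − |M_Least|. -/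

import Mathlib

theorem stmt4 {Address Coin : Type*} [DecidableEq Address] [DecidableEq Coin]
    (active : Finset Coin) (hc : Finset (Address × Coin))
    (C : Address → Finset Coin) (hC : ∀ a c, c ∈ C a ↔ (a, c) ∈ hc)
    (MInact MLeast MMost : Finset Coin) (MPairs : Finset (Address × Coin))
    (hInact : ∀ c, c ∈ MInact ↔ (c ∉ active ∧ ∃ a, c ∈ C a))
    (hLeast : ∀ c, c ∈ MLeast ↔ (c ∈ active ∧ ∀ a, c ∉ C a))
    (hMost : ∀ c, c ∈ MMost ↔ ∃ a b, a ≠ b ∧ c ∈ C a ∧ c ∈ C b)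
    (hPairs : ∀ a c, (a, c) ∈ MPairs ↔ (c ∈ C a ∧ ∃ b, b ≠ a ∧ c ∈ C b))
    (hVge : (MInact.card : ℤ) + MPairs.card - MMost.card = 0) :
    (∑ a ∈ hc.image Prod.fst, ((C a).card : ℤ)) = (active.card : ℤ) - MLeast.card := by
  classical
  -- Step 1: 2 * |MMost| ≤ |MPairs|
  have hsub : MMost ⊆ MPairs.image Prod.snd := by
    intro c hcm
    obtain ⟨a, b, hab, ha, hb⟩ := (hMost c).1 hcm
    exact Finset.mem_image.2 ⟨(a, c), (hPairs a c).2 ⟨ha, b, hab.symm, hb⟩, rfl⟩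
  have h2 : 2 * MMost.card ≤ MPairs.card := by
    rw [Finset.card_eq_sum_card_image Prod.snd MPairs]
    calc 2 * MMost.card = ∑ _c ∈ MMost, 2 := by
          simp [Finset.sum_const, mul_comm]
      _ ≤ ∑ c ∈ MMost, (MPairs.filter fun p => p.2 = c).card := by
          apply Finset.sum_le_sum
          intro c hcm
          obtain ⟨a, b, hab, ha, hb⟩ := (hMost c).1 hcm
          have hpa : (a, c) ∈ MPairs.filter fun p => p.2 = c :=
            Finset.mem_filter.2 ⟨(hPairs a c).2 ⟨ha, b, hab.symm, hb⟩, rfl⟩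
          have hpb : (b, c) ∈ MPairs.filter fun p => p.2 = c :=
            Finset.mem_filter.2 ⟨(hPairs b c).2 ⟨hb, a, hab, ha⟩, rfl⟩
          have hss : ({(a, c), (b, c)} : Finset (Address × Coin)) ⊆
              MPairs.filter fun p => p.2 = c := by
            intro p hp
            rcases Finset.mem_insert.1 hp with h | h
            · exact h ▸ hpa
            · exact (Finset.mem_singleton.1 h) ▸ hpb
          have hcard2 : ({(a, c), (b, c)} : Finset (Address × Coin)).card = 2 := by
            rw [Finset.card_insert_of_notMem (by simp [hab]), Finset.card_singleton]
          calc 2 = ({(a, c), (b, c)} : Finset (Address × Coin)).card := hcard2.symm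
            _ ≤ _ := Finset.card_le_card hss
      _ ≤ ∑ c ∈ MPairs.image Prod.snd, (MPairs.filter fun p => p.2 = c).card :=
          Finset.sum_le_sum_of_subset hsub
  -- Step 2: all error sets are empty
  have hIz : MInact.card = 0 := by omega
  have hMz : MMost.card = 0 := by omega
  have hIempty : MInact = ∅ := Finset.card_eq_zero.1 hIz
  have hMempty : MMost = ∅ := Finset.card_eq_zero.1 hMz
  -- Step 3: snd is injective on hc
  have hinj : Set.InjOn Prod.snd (hc : Set (Address × Coin)) := by
    intro p hp q hq h
    by_contra hne
    have hfst : p.1 ≠ q.1 := by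
      intro h1; exact hne (Prod.ext h1 h)
    have : p.2 ∈ MMost := by
      refine (hMost p.2).2 ⟨p.1, q.1, hfst, ?_, ?_⟩
      · exact (hC p.1 p.2).2 hp
      · rw [hC]; rw [h]; exact hq
    simp [hMempty] at this
  -- Step 4: owned coins = active \ MLeast
  have howned : hc.image Prod.snd = active \ MLeast := by
    ext c
    simp only [Finset.mem_image, Finset.mem_sdiff]
    constructor
    · rintro ⟨p, hp, rfl⟩
      have hown : ∃ a, p.2 ∈ C a := ⟨p.1, (hC p.1 p.2).2 hp⟩
      have hact : p.2 ∈ active := by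
        by_contra hna
        have : p.2 ∈ MInact := (hInact p.2).2 ⟨hna, hown⟩
        simp [hIempty] at this
      refine ⟨hact, ?_⟩
      intro hL
      obtain ⟨a, ha⟩ := hown
      exact ((hLeast p.2).1 hL).2 a ha
    · rintro ⟨hact, hnL⟩
      have : ¬ ∀ a, c ∉ C a := fun h => hnL ((hLeast c).2 ⟨hact, h⟩)
      push_neg at this
      obtain ⟨a, ha⟩ := this
      exact ⟨(a, c), (hC a c).1 ha, rfl⟩
  -- Step 5: the sum equals |hc|
  have hsum : ∑ a ∈ hc.image Prod.fst, (C a).card = hc.card := by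
    rw [Finset.card_eq_sum_card_fiberwise
      (fun p hp => Finset.mem_image_of_mem Prod.fst hp)]
    apply Finset.sum_congr rfl
    intro a _
    have himg : C a = (hc.filter fun p => p.1 = a).image Prod.snd := by
      ext c
      simp only [Finset.mem_image, Finset.mem_filter, hC]
      constructor
      · intro h; exact ⟨(a, c), ⟨h, rfl⟩, rfl⟩
      · rintro ⟨p, ⟨hp, h1⟩, rfl⟩; rw [← h1]; exact hp
    rw [himg, Finset.card_image_of_injOn]
    intro p hp q hq h
    simp only [Finset.coe_filter, Set.mem_setOf_eq] at hp hq
    exact Prod.ext (hp.2.trans hq.2.symm) h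
  -- Step 6: conclude
  have hcard : hc.card = (active \ MLeast).card := by
    rw [← howned, Finset.card_image_of_injOn hinj]
  have hML : MLeast ⊆ active := fun c h => ((hLeast c).1 h).1
  have hsd : (active \ MLeast).card = active.card - MLeast.card := Finset.card_sdiff_of_subset hML
  have hle : MLeast.card ≤ active.card := Finset.card_le_card hML
  have hfin : (∑ a ∈ hc.image Prod.fst, ((C a).card : ℤ)) = (hc.card : ℤ) := by
    exact_mod_cast congrArg (Nat.cast : ℕ → ℤ) hsum
  rw [hfin, hcard, hsd]
  omega
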